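/- Let V⁻(x₀,x₁) = (1/2)‖x₀ - x̂₀‖²_{P₀⁻¹} + (1/2)‖x₁ - A x₀‖²_{Q⁻¹} with P₀, Q symmetric positive definite. Then min over x₀ of V⁻(x₀, x̂₁) equals (1/2)‖x̂₁ - A x̂₀‖²_{P₁⁻¹} where P₁ = A P₀ Aᵀ + Q, and the minimizer is x₀* = x̂₀ + P₀ Aᵀ (A P₀ Aᵀ + Q)⁻¹ (x̂₁ - A x̂₀). -/

import Mathlib

open Matrix

lemma symm_dot {n : ℕ} {M : Matrix (Fin n) (Fin n) ℝ} (hM : Mᵀ = M)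
    (u v : Fin n → ℝ) : u ⬝ᵥ (M *ᵥ v) = v ⬝ᵥ (M *ᵥ u) := by
  rw [Matrix.dotProduct_mulVec, ← Matrix.mulVec_transpose, hM, dotProduct_comm]

lemma dot_transpose {n : ℕ} (A : Matrix (Fin n) (Fin n) ℝ)
    (u v : Fin n → ℝ) : u ⬝ᵥ (Aᵀ *ᵥ v) = (A *ᵥ u) ⬝ᵥ v := by
  rw [Matrix.dotProduct_mulVec, ← Matrix.mulVec_transpose, Matrix.transpose_transpose,
    dotProduct_comm]

lemma quad_expand {n : ℕ} {M : Matrix (Fin n) (Fin n) ℝ} (hM : Mᵀ = M)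
    (u v : Fin n → ℝ) : (u - v) ⬝ᵥ (M *ᵥ (u - v))
      = u ⬝ᵥ (M *ᵥ u) - 2 * (u ⬝ᵥ (M *ᵥ v)) + v ⬝ᵥ (M *ᵥ v) := by
  rw [Matrix.mulVec_sub, dotProduct_sub, sub_dotProduct,
    sub_dotProduct, symm_dot hM v u]
  ring

lemma complete_square {n : ℕ} (S Pinv Qinv A : Matrix (Fin n) (Fin n) ℝ)
    (hSdef : S = Pinv + Aᵀ * Qinv * A) (hQT : Qinvᵀ = Qinv) (hST : Sᵀ = S)
    (e d m : Fin n → ℝ) (hSm : S *ᵥ m = Aᵀ *ᵥ (Qinv *ᵥ d)) (c : ℝ)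
    (hc : m ⬝ᵥ (S *ᵥ m) = d ⬝ᵥ (Qinv *ᵥ d) - c) :
    (1/2) * (e ⬝ᵥ (Pinv *ᵥ e)) + (1/2) * ((d - A *ᵥ e) ⬝ᵥ (Qinv *ᵥ (d - A *ᵥ e)))
      = (1/2) * ((e - m) ⬝ᵥ (S *ᵥ (e - m))) + (1/2) * c := by
  rw [quad_expand hQT d (A *ᵥ e), quad_expand hST e m, hc]
  have hcross1 : d ⬝ᵥ (Qinv *ᵥ (A *ᵥ e)) = (A *ᵥ e) ⬝ᵥ (Qinv *ᵥ d) := symm_dot hQT d _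
  have hcross2 : e ⬝ᵥ (S *ᵥ m) = (A *ᵥ e) ⬝ᵥ (Qinv *ᵥ d) := by
    rw [hSm, dot_transpose]
  have heSe : e ⬝ᵥ (S *ᵥ e) = e ⬝ᵥ (Pinv *ᵥ e) + (A *ᵥ e) ⬝ᵥ (Qinv *ᵥ (A *ᵥ e)) := by
    rw [hSdef, Matrix.add_mulVec, dotProduct_add, ← Matrix.mulVec_mulVec,
      ← Matrix.mulVec_mulVec, dot_transpose]
  rw [hcross1, hcross2, heSe]
  ring

theorem partial_minimization_update {n : ℕ}
    (P0 Q A : Matrix (Fin n) (Fin n) ℝ) (hP0 : P0.PosDef) (hQ : Q.PosDef)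
    (xhat0 xhat1 : Fin n → ℝ)
    (Vm : (Fin n → ℝ) → (Fin n → ℝ) → ℝ)
    (hVm : ∀ x0 x1, Vm x0 x1 = (1/2) * ((x0 - xhat0) ⬝ᵥ (P0⁻¹ *ᵥ (x0 - xhat0)))
        + (1/2) * ((x1 - A *ᵥ x0) ⬝ᵥ (Q⁻¹ *ᵥ (x1 - A *ᵥ x0))))
    (P1 : Matrix (Fin n) (Fin n) ℝ) (hP1 : P1 = A * P0 * Aᵀ + Q)
    (xstar0 : Fin n → ℝ)
    (hxstar0 : xstar0 = xhat0 + (P0 * Aᵀ * (A * P0 * Aᵀ + Q)⁻¹) *ᵥ (xhat1 - A *ᵥ xhat0)) :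
    (∀ x0, (1/2) * ((xhat1 - A *ᵥ xhat0) ⬝ᵥ (P1⁻¹ *ᵥ (xhat1 - A *ᵥ xhat0))) ≤ Vm x0 xhat1)
      ∧ Vm xstar0 xhat1 = (1/2) * ((xhat1 - A *ᵥ xhat0) ⬝ᵥ (P1⁻¹ *ᵥ (xhat1 - A *ᵥ xhat0))) := by
  have hP0i : (P0⁻¹).PosDef := hP0.inv
  have hQi : (Q⁻¹).PosDef := hQ.inv
  set S : Matrix (Fin n) (Fin n) ℝ := P0⁻¹ + Aᵀ * Q⁻¹ * A with hSdef
  have hQiT : (Q⁻¹)ᵀ = Q⁻¹ := by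
    have := hQi.isHermitian; rwa [Matrix.IsHermitian, conjTranspose_eq_transpose_of_trivial] at this
  have hS : S.PosDef := by
    have h1 : (Aᵀ * Q⁻¹ * A).PosSemidef := by
      have := hQi.posSemidef.conjTranspose_mul_mul_same A
      simpa [conjTranspose_eq_transpose_of_trivial] using this
    exact hP0i.add_posSemidef h1
  have hP1pd : P1.PosDef := by
    rw [hP1]
    have h1 : (A * P0 * Aᵀ).PosSemidef := by
      have := hP0.posSemidef.mul_mul_conjTranspose_same A
      simpa [conjTranspose_eq_transpose_of_trivial] using this
    exact Matrix.PosDef.posSemidef_add h1 hQ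
  have hST : Sᵀ = S := by
    have := hS.isHermitian; rwa [Matrix.IsHermitian, conjTranspose_eq_transpose_of_trivial] at this
  haveI : Invertible P0 := hP0.isUnit.invertible
  haveI : Invertible Q := hQ.isUnit.invertible
  haveI : Invertible S := hS.isUnit.invertible
  haveI : Invertible P1 := hP1pd.isUnit.invertible
  -- key matrix identities
  have hkey : A * P0 * S = A + A * P0 * Aᵀ * Q⁻¹ * A := by
    rw [hSdef, mul_add, mul_assoc A P0 P0⁻¹, Matrix.mul_inv_of_invertible, mul_one]
    noncomm_ring
  have hwood : P1⁻¹ = Q⁻¹ - Q⁻¹ * A * S⁻¹ * Aᵀ * Q⁻¹ := by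
    apply Matrix.inv_eq_right_inv
    have expand : P1 * (Q⁻¹ - Q⁻¹ * A * S⁻¹ * Aᵀ * Q⁻¹)
        = A * P0 * Aᵀ * Q⁻¹ + 1
          - (A + A * P0 * Aᵀ * Q⁻¹ * A) * S⁻¹ * Aᵀ * Q⁻¹ := by
      rw [hP1]
      have hq1 : Q * Q⁻¹ = 1 := Matrix.mul_inv_of_invertible Q
      rw [mul_sub, add_mul, add_mul, hq1]
      have h3 : Q * (Q⁻¹ * A * S⁻¹ * Aᵀ * Q⁻¹) = A * S⁻¹ * Aᵀ * Q⁻¹ := by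
        calc Q * (Q⁻¹ * A * S⁻¹ * Aᵀ * Q⁻¹) = (Q * Q⁻¹) * (A * S⁻¹ * Aᵀ * Q⁻¹) := by
              noncomm_ring
        _ = A * S⁻¹ * Aᵀ * Q⁻¹ := by rw [hq1, one_mul]
      rw [h3]
      noncomm_ring
    rw [expand, ← hkey]
    have h4 : A * P0 * S * S⁻¹ * Aᵀ * Q⁻¹ = A * P0 * Aᵀ * Q⁻¹ := by
      rw [mul_assoc (A * P0) S S⁻¹, Matrix.mul_inv_of_invertible, mul_one]
    rw [h4]
    noncomm_ring
  have hgain : S⁻¹ * (Aᵀ * Q⁻¹) = P0 * Aᵀ * P1⁻¹ := by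
    have h1 : Aᵀ * Q⁻¹ * P1 = S * (P0 * Aᵀ) := by
      rw [hP1, hSdef, mul_add, add_mul]
      have e1 : Aᵀ * Q⁻¹ * Q = Aᵀ := by
        rw [mul_assoc, Matrix.inv_mul_of_invertible, mul_one]
      have e2 : P0⁻¹ * (P0 * Aᵀ) = Aᵀ := by
        rw [← mul_assoc, Matrix.inv_mul_of_invertible, one_mul]
      rw [e1, e2]
      noncomm_ring
    have h2 : Aᵀ * Q⁻¹ = S * (P0 * Aᵀ) * P1⁻¹ := by
      rw [← h1, mul_assoc, Matrix.mul_inv_of_invertible, mul_one]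
    rw [h2]
    calc S⁻¹ * (S * (P0 * Aᵀ) * P1⁻¹) = (S⁻¹ * S) * (P0 * Aᵀ * P1⁻¹) := by noncomm_ring
    _ = P0 * Aᵀ * P1⁻¹ := by rw [Matrix.inv_mul_of_invertible, one_mul]
  -- vectors
  set d : Fin n → ℝ := xhat1 - A *ᵥ xhat0 with hd
  set m : Fin n → ℝ := (P0 * Aᵀ * P1⁻¹) *ᵥ d with hm
  have hxstar : xstar0 = xhat0 + m := by rw [hxstar0, hm, ← hP1]
  have hSm : S *ᵥ m = Aᵀ *ᵥ (Q⁻¹ *ᵥ d) := by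
    have hmat : S * (P0 * Aᵀ * P1⁻¹) = Aᵀ * Q⁻¹ := by
      rw [← hgain, ← mul_assoc, Matrix.mul_inv_of_invertible, one_mul]
    rw [hm, Matrix.mulVec_mulVec, hmat, ← Matrix.mulVec_mulVec]
  have hmSm : m ⬝ᵥ (S *ᵥ m) = d ⬝ᵥ (Q⁻¹ *ᵥ d) - d ⬝ᵥ (P1⁻¹ *ᵥ d) := by
    have h0 : d ⬝ᵥ (Q⁻¹ *ᵥ d) - d ⬝ᵥ (P1⁻¹ *ᵥ d) = d ⬝ᵥ ((Q⁻¹ - P1⁻¹) *ᵥ d) := by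
      rw [Matrix.sub_mulVec, dotProduct_sub]
    have hsub : Q⁻¹ - P1⁻¹ = Q⁻¹ * (A * (P0 * Aᵀ * P1⁻¹)) := by
      rw [← hgain, hwood]; noncomm_ring
    rw [h0, hsub, ← Matrix.mulVec_mulVec, ← Matrix.mulVec_mulVec,
      symm_dot hQiT d, hSm, dot_transpose, hm]
  have hexp : ∀ x0, Vm x0 xhat1
      = (1/2) * ((x0 - xstar0) ⬝ᵥ (S *ᵥ (x0 - xstar0))) + (1/2) * (d ⬝ᵥ (P1⁻¹ *ᵥ d)) := by
    intro x0
    rw [hVm]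
    have h1 : xhat1 - A *ᵥ x0 = d - A *ᵥ (x0 - xhat0) := by
      rw [hd, Matrix.mulVec_sub]; abel
    have h2 : x0 - xstar0 = (x0 - xhat0) - m := by rw [hxstar]; abel
    rw [h1, h2]
    exact complete_square S P0⁻¹ Q⁻¹ A hSdef hQiT hST (x0 - xhat0) d m hSm
      (d ⬝ᵥ (P1⁻¹ *ᵥ d)) hmSm
  constructor
  · intro x0
    rw [hexp x0]
    have hnn : 0 ≤ (x0 - xstar0) ⬝ᵥ (S *ᵥ (x0 - xstar0)) := by
      have := hS.posSemidef.dotProduct_mulVec_nonneg (x0 - xstar0)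
      simpa using this
    nlinarith
  · rw [hexp xstar0]
    simp
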